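/- Let (H, ⟨·,·⟩) be a finite-dimensional real inner product space, C a positive-definite self-adjoint operator on H, Φ : H → ℝ differentiable, and define one step of the integrator by q' = cos(h) q + sin(h) v - (h/2) sin(h) C DΦ(q), v' = -sin(h) q + cos(h) v - (h/2) cos(h) C DΦ(q) - (h/2) C DΦ(q'). With H(q,v) = Φ(q) + (1/2)⟨q, C⁻¹ q⟩ + (1/2)⟨v, C⁻¹ v⟩, one has H(q', v') - H(q, v) = Φ(q') - Φ(q) + (h²/8)(⟨DΦ(q), C DΦ(q)⟩ - ⟨DΦ(q'), C DΦ(q')⟩) - (h/2)(⟨v, DΦ(q)⟩ + ⟨v', DΦ(q')⟩). -/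

import Mathlib

theorem stmt_7 {H : Type*} [NormedAddCommGroup H] [InnerProductSpace ℝ H]
    [FiniteDimensional ℝ H]
    (C invC : H →ₗ[ℝ] H)
    (hCsa : ∀ x y : H, (inner ℝ (C x) y : ℝ) = inner ℝ x (C y))
    (hCpos : ∀ x : H, x ≠ 0 → (0:ℝ) < inner ℝ (C x) x)
    (hinv : ∀ x : H, invC (C x) = x) (hinv' : ∀ x : H, C (invC x) = x)
    (Φ : H → ℝ) (hΦ : Differentiable ℝ Φ)
    (h : ℝ) (q v q' v' : H)
    (hq' : q' = Real.cos h • q + Real.sin h • v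
      - (h / 2 * Real.sin h) • C (gradient Φ q))
    (hv' : v' = -(Real.sin h • q) + Real.cos h • v
      - (h / 2 * Real.cos h) • C (gradient Φ q) - (h / 2) • C (gradient Φ q')) :
    (Φ q' + (1 / 2) * (inner ℝ q' (invC q') : ℝ) + (1 / 2) * (inner ℝ v' (invC v') : ℝ))
      - (Φ q + (1 / 2) * (inner ℝ q (invC q) : ℝ) + (1 / 2) * (inner ℝ v (invC v) : ℝ))
    = Φ q' - Φ q
      + h ^ 2 / 8 * ((inner ℝ (gradient Φ q) (C (gradient Φ q)) : ℝ)
          - (inner ℝ (gradient Φ q') (C (gradient Φ q')) : ℝ))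
      - h / 2 * ((inner ℝ v (gradient Φ q) : ℝ) + (inner ℝ v' (gradient Φ q') : ℝ)) := by
  have sym : ∀ x y : H, (inner ℝ x (invC y) : ℝ) = inner ℝ y (invC x) := by
    intro x y
    calc (inner ℝ x (invC y) : ℝ) = inner ℝ (C (invC x)) (invC y) := by rw [hinv']
    _ = inner ℝ (invC x) (C (invC y)) := hCsa _ _
    _ = inner ℝ (invC x) y := by rw [hinv']
    _ = inner ℝ y (invC x) := real_inner_comm _ _
  have key : ∀ x y : H, (inner ℝ (C x) (invC y) : ℝ) = inner ℝ x y := by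
    intro x y
    rw [sym, hinv, real_inner_comm]
  subst hv' hq'
  set g := gradient Φ q with hg
  set g' := gradient Φ (Real.cos h • q + Real.sin h • v - (h / 2 * Real.sin h) • C g) with hg'
  have A1 : (inner ℝ g q : ℝ) = inner ℝ q g := real_inner_comm _ _
  have A2 : (inner ℝ g v : ℝ) = inner ℝ v g := real_inner_comm _ _
  have A3 : (inner ℝ g' q : ℝ) = inner ℝ q g' := real_inner_comm _ _
  have A4 : (inner ℝ g' v : ℝ) = inner ℝ v g' := real_inner_comm _ _
  have A5 : (inner ℝ g' (C g) : ℝ) = inner ℝ g (C g') := by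
    rw [real_inner_comm, hCsa]
  have A6 : (inner ℝ v (invC q) : ℝ) = inner ℝ q (invC v) := sym v q
  simp only [inner_add_left, inner_add_right, inner_sub_left, inner_sub_right,
    inner_neg_left, inner_neg_right, inner_smul_left, inner_smul_right,
    map_add, map_sub, map_neg, map_smul, RingHom.id_apply, smul_eq_mul,
    conj_trivial, hinv, key, hCsa, A1, A2, A3, A4, A5, A6]
  linear_combination ((inner ℝ q (invC q) : ℝ) / 2 + (inner ℝ v (invC v) : ℝ) / 2
    - h / 2 * (inner ℝ v g : ℝ) + h ^ 2 / 8 * (inner ℝ g (C g) : ℝ)) * Real.sin_sq_add_cos_sq h
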